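/- Let κ > 0 with κ ≠ 4 and let n be real. Define the exponents α = −2n/(κ−4), β = 2n/(κ−4), γ = −2κn²/(κ−4)², x = 2κn²/(κ−4)², and define F(u,v) = u^{α} · v^{β} · (u−v)^{γ} using principal-branch complex powers, for u in the upper half-plane {z : Im z > 0} and v in the lower half-plane {z : Im z < 0}. Then for all such (u,v): (κ/2)·[∂²F/∂u² + 2·∂²F/∂u∂v + ∂²F/∂v²] + (2/u)·∂F/∂u + (2/v)·∂F/∂v − x·(1/u² + 1/v²)·F − n·(1/u² − 1/v²)·F = 0. -/

import Mathlib

open Complex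

private lemma slit_pos {z : ℂ} (h : 0 < z.im) : z ∈ slitPlane :=
  Complex.mem_slitPlane_iff.2 (Or.inr (ne_of_gt h))

private lemma slit_neg {z : ℂ} (h : z.im < 0) : z ∈ slitPlane :=
  Complex.mem_slitPlane_iff.2 (Or.inr (ne_of_lt h))

private lemma hdu (a b c : ℂ) {u v : ℂ} (hu : 0 < u.im) (hv : v.im < 0) :
    HasDerivAt (fun u' : ℂ => u' ^ a * v ^ b * (u' - v) ^ c)
      (a * (u ^ (a-1) * v ^ b * (u - v) ^ c) + c * (u ^ a * v ^ b * (u - v) ^ (c-1))) u := by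
  have huv : 0 < (u - v).im := by simp only [sub_im]; linarith
  have h1 : HasDerivAt (fun u' : ℂ => u' ^ a) (a * u ^ (a-1) * 1) u :=
    (hasDerivAt_id u).cpow_const (slit_pos hu)
  have h2 : HasDerivAt (fun u' : ℂ => (u' - v) ^ c) (c * (u - v) ^ (c-1) * 1) u :=
    ((hasDerivAt_id u).sub_const v).cpow_const (slit_pos huv)
  have := (h1.mul_const (v ^ b)).mul h2
  exact this.congr_deriv (by ring)

private lemma hdv (a b c : ℂ) {u v : ℂ} (hu : 0 < u.im) (hv : v.im < 0) :
    HasDerivAt (fun v' : ℂ => u ^ a * v' ^ b * (u - v') ^ c)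
      (b * (u ^ a * v ^ (b-1) * (u - v) ^ c) - c * (u ^ a * v ^ b * (u - v) ^ (c-1))) v := by
  have huv : 0 < (u - v).im := by simp only [sub_im]; linarith
  have h1 : HasDerivAt (fun v' : ℂ => v' ^ b) (b * v ^ (b-1) * 1) v :=
    (hasDerivAt_id v).cpow_const (slit_neg hv)
  have h2 : HasDerivAt (fun v' : ℂ => (u - v') ^ c) (c * (u - v) ^ (c-1) * (0 - 1)) v :=
    ((hasDerivAt_const v u).sub (hasDerivAt_id v)).cpow_const (slit_pos huv)
  have := ((hasDerivAt_const v (u ^ a)).mul h1).mul h2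
  exact this.congr_deriv (by simp only [Pi.mul_apply]; ring)


private lemma key_alg (a x K N u v : ℂ) (hune : u ≠ 0) (hvne : v ≠ 0) (hwne : u - v ≠ 0)
    (r3 : K * a ^ 2 - 2 * x = 0) (r4 : (K - 4) * a + 2 * N = 0) :
    K/2 *
        ( (a*((a-1)/u^2 + (-x)/(u*(u-v))) + (-x)*(a/(u*(u-v)) + ((-x)-1)/((u-v)^2)))
        + 2*((-a)*(a/(u*v) + (-x)/(v*(u-v))) - (-x)*(a/(u*(u-v)) + ((-x)-1)/((u-v)^2)))
        + ((-a)*(((-a)-1)/v^2 - (-x)/(v*(u-v))) - (-x)*((-a)/(v*(u-v)) - ((-x)-1)/((u-v)^2))) )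
      + 2/u * (a/u + (-x)/(u-v)) + 2/v * ((-a)/v - (-x)/(u-v))
      - x*(1/u^2+1/v^2) - N*(1/u^2-1/v^2) = 0 := by
  have h1 : a*((a-1)/u^2 + (-x)/(u*(u-v))) + (-x)*(a/(u*(u-v)) + ((-x)-1)/((u-v)^2))
      = (a*(a-1)*v^2*(u-v)^2 - 2*a*x*u*v^2*(u-v) + x*(x+1)*u^2*v^2) / (u^2*v^2*(u-v)^2) := by
    field_simp; ring
  have h2 : (-a)*(a/(u*v) + (-x)/(v*(u-v))) - (-x)*(a/(u*(u-v)) + ((-x)-1)/((u-v)^2))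
      = (-(a*a*u*v*(u-v)^2) + a*x*u^2*v*(u-v) + a*x*u*v^2*(u-v) - x*(x+1)*u^2*v^2) / (u^2*v^2*(u-v)^2) := by
    field_simp; ring
  have h3 : (-a)*(((-a)-1)/v^2 - (-x)/(v*(u-v))) - (-x)*((-a)/(v*(u-v)) - ((-x)-1)/((u-v)^2))
      = (a*(a+1)*u^2*(u-v)^2 - 2*a*x*u^2*v*(u-v) + x*(x+1)*u^2*v^2) / (u^2*v^2*(u-v)^2) := by
    field_simp; ring
  have h4 : 2/u * (a/u + (-x)/(u-v)) = (2*a*v^2*(u-v)^2 - 2*x*u*v^2*(u-v)) / (u^2*v^2*(u-v)^2) := by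
    field_simp; ring
  have h5 : 2/v * ((-a)/v - (-x)/(u-v)) = (-(2*a*u^2*(u-v)^2) + 2*x*u^2*v*(u-v)) / (u^2*v^2*(u-v)^2) := by
    field_simp; ring
  have h6 : x*(1/u^2+1/v^2) = (x*(v^2+u^2)*(u-v)^2) / (u^2*v^2*(u-v)^2) := by
    field_simp
  have h7 : N*(1/u^2-1/v^2) = (N*(v^2-u^2)*(u-v)^2) / (u^2*v^2*(u-v)^2) := by
    field_simp
  rw [h1, h2, h3, h4, h5, h6, h7]
  simp only [mul_div_assoc', ← add_div, div_sub_div_same]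
  rw [div_eq_zero_iff]
  left
  linear_combination ((u-v)^4 / 2) * r3 + ((u-v)^2 * (u^2-v^2) / 2) * r4

set_option maxHeartbeats 2000000 in
/-- The bosonic power-law ansatz `F(u,v) = u^α v^β (u-v)^γ` with exponents
`α = -2n/(κ-4)`, `β = 2n/(κ-4)`, `γ = -2κn²/(κ-4)²`, `x = 2κn²/(κ-4)²` solves the
leading-order SLE equation, for `u` in the upper half-plane and `v` in the lower
half-plane. -/
theorem stmt1 (κ n : ℝ) (hκ : 0 < κ) (hκ4 : κ ≠ 4)
    (α β γ x : ℝ)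
    (hα : α = -(2 * n) / (κ - 4))
    (hβ : β = 2 * n / (κ - 4))
    (hγ : γ = -(2 * κ * n ^ 2) / (κ - 4) ^ 2)
    (hx : x = 2 * κ * n ^ 2 / (κ - 4) ^ 2)
    (F : ℂ → ℂ → ℂ)
    (hF : ∀ u v : ℂ, F u v = u ^ (α : ℂ) * v ^ (β : ℂ) * (u - v) ^ (γ : ℂ)) :
    ∀ u v : ℂ, 0 < u.im → v.im < 0 →
      (κ / 2 : ℂ) *
          (deriv (fun u' => deriv (fun u'' => F u'' v) u') u
            + 2 * deriv (fun u' => deriv (fun v' => F u' v') v) u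
            + deriv (fun v' => deriv (fun v'' => F u v'') v') v)
        + (2 / u) * deriv (fun u' => F u' v) u
        + (2 / v) * deriv (fun v' => F u v') v
        - (x : ℂ) * (1 / u ^ 2 + 1 / v ^ 2) * F u v
        - (n : ℂ) * (1 / u ^ 2 - 1 / v ^ 2) * F u v = 0 := by
  intro u v hu hv
  set a : ℂ := (α : ℂ) with ha
  set b : ℂ := (β : ℂ) with hb
  set c : ℂ := (γ : ℂ) with hc
  have hune : u ≠ 0 := fun h => by simp [h] at hu
  have hvne : v ≠ 0 := fun h => by simp [h] at hv
  have hwne : u - v ≠ 0 := fun h => by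
    have : (u - v).im = 0 := by rw [h]; simp
    simp only [sub_im] at this; linarith
  -- first derivatives as formulas valid on open half-planes
  have hFu : ∀ u' : ℂ, 0 < u'.im → deriv (fun u'' => F u'' v) u' =
      a * (u' ^ (a-1) * v ^ b * (u' - v) ^ c) + c * (u' ^ a * v ^ b * (u' - v) ^ (c-1)) := by
    intro u' hu'
    simp only [hF]
    exact (hdu a b c hu' hv).deriv
  have hFv : ∀ v' : ℂ, v'.im < 0 → deriv (fun v'' => F u v'') v' =
      b * (u ^ a * v' ^ (b-1) * (u - v') ^ c) - c * (u ^ a * v' ^ b * (u - v') ^ (c-1)) := by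
    intro v' hv'
    simp only [hF]
    exact (hdv a b c hu hv').deriv
  have hFvu : ∀ u' : ℂ, 0 < u'.im → deriv (fun v' => F u' v') v =
      b * (u' ^ a * v ^ (b-1) * (u' - v) ^ c) - c * (u' ^ a * v ^ b * (u' - v) ^ (c-1)) := by
    intro u' hu'
    simp only [hF]
    exact (hdv a b c hu' hv).deriv
  have hopenu : {z : ℂ | 0 < z.im} ∈ nhds u :=
    (isOpen_lt continuous_const Complex.continuous_im).mem_nhds hu
  have hopenv : {z : ℂ | z.im < 0} ∈ nhds v :=
    (isOpen_lt Complex.continuous_im continuous_const).mem_nhds hv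
  -- second derivative in u
  have h2uu : deriv (fun u' => deriv (fun u'' => F u'' v) u') u =
      a * ((a-1) * (u ^ (a-1-1) * v ^ b * (u - v) ^ c) + c * (u ^ (a-1) * v ^ b * (u - v) ^ (c-1)))
      + c * (a * (u ^ (a-1) * v ^ b * (u - v) ^ (c-1)) + (c-1) * (u ^ a * v ^ b * (u - v) ^ (c-1-1))) := by
    have heq : (fun u' => deriv (fun u'' => F u'' v) u') =ᶠ[nhds u]
        (fun u' => a * (u' ^ (a-1) * v ^ b * (u' - v) ^ c) + c * (u' ^ a * v ^ b * (u' - v) ^ (c-1))) := by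
      filter_upwards [hopenu] with u' hu' using hFu u' hu'
    rw [heq.deriv_eq]
    exact (((hdu (a-1) b c hu hv).const_mul a).add ((hdu a b (c-1) hu hv).const_mul c)).deriv
  -- mixed second derivative
  have h2uv : deriv (fun u' => deriv (fun v' => F u' v') v) u =
      b * (a * (u ^ (a-1) * v ^ (b-1) * (u - v) ^ c) + c * (u ^ a * v ^ (b-1) * (u - v) ^ (c-1)))
      - c * (a * (u ^ (a-1) * v ^ b * (u - v) ^ (c-1)) + (c-1) * (u ^ a * v ^ b * (u - v) ^ (c-1-1))) := by
    have heq : (fun u' => deriv (fun v' => F u' v') v) =ᶠ[nhds u]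
        (fun u' => b * (u' ^ a * v ^ (b-1) * (u' - v) ^ c) - c * (u' ^ a * v ^ b * (u' - v) ^ (c-1))) := by
      filter_upwards [hopenu] with u' hu' using hFvu u' hu'
    rw [heq.deriv_eq]
    exact (((hdu a (b-1) c hu hv).const_mul b).sub ((hdu a b (c-1) hu hv).const_mul c)).deriv
  -- second derivative in v
  have h2vv : deriv (fun v' => deriv (fun v'' => F u v'') v') v =
      b * ((b-1) * (u ^ a * v ^ (b-1-1) * (u - v) ^ c) - c * (u ^ a * v ^ (b-1) * (u - v) ^ (c-1)))
      - c * (b * (u ^ a * v ^ (b-1) * (u - v) ^ (c-1)) - (c-1) * (u ^ a * v ^ b * (u - v) ^ (c-1-1))) := by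
    have heq : (fun v' => deriv (fun v'' => F u v'') v') =ᶠ[nhds v]
        (fun v' => b * (u ^ a * v' ^ (b-1) * (u - v') ^ c) - c * (u ^ a * v' ^ b * (u - v') ^ (c-1))) := by
      filter_upwards [hopenv] with v' hv' using hFv v' hv'
    rw [heq.deriv_eq]
    exact (((hdv a (b-1) c hu hv).const_mul b).sub ((hdv a b (c-1) hu hv).const_mul c)).deriv
  rw [h2uu, h2uv, h2vv, hFu u hu, hFv v hv, hF u v]
  rw [show a - 1 - 1 = a - (1+1) by ring, show b - 1 - 1 = b - (1+1) by ring,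
      show c - 1 - 1 = c - (1+1) by ring]
  simp only [cpow_sub _ _ hune, cpow_sub _ _ hvne, cpow_sub _ _ hwne, cpow_one,
    show ((1:ℂ)+1) = (2:ℕ) by norm_num, cpow_natCast]
  have hκ4' : (κ : ℂ) - 4 ≠ 0 := sub_ne_zero.2 (by exact_mod_cast hκ4)
  generalize u ^ a = A
  generalize v ^ b = B
  generalize (u - v) ^ c = C
  have r1 : b = -a := by rw [ha, hb, hα, hβ]; push_cast; ring
  have r2 : c = -(x : ℂ) := by rw [hc, hγ, hx]; push_cast; ring
  have r3 : (κ : ℂ) * a ^ 2 - 2 * (x : ℂ) = 0 := by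
    rw [ha, hα, hx]; push_cast; field_simp; ring
  have r4 : ((κ : ℂ) - 4) * a + 2 * (n : ℂ) = 0 := by
    rw [ha, hα]; push_cast; field_simp; ring
  rw [r1, r2]
  have key := key_alg a (x : ℂ) (κ : ℂ) (n : ℂ) u v hune hvne hwne r3 r4
  linear_combination (A * B * C) * key
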